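/- Let n ≥ 3 be an integer, H a real constant, and let (x, y, θ) be a Delaunay generating curve on an interval I with constant force F, and suppose cos θ(t) ≠ 0 for all t ∈ I. Define f(t) = x(t) + y(t)·tan θ(t) (the x-axis intercept of the line through (x(t), y(t)) normal to the curve). Then f'(t) = (n−1)·F / (y(t)^{n−2}·cos²θ(t)) for all t ∈ I; in particular, f' has everywhere the same sign as F. -/

import Mathlib

open Real Set

/-- For a Delaunay generating curve `(x, y, θ)` on an interval `I`
with constant force `F` and `cos θ` nonvanishing on `I`, the x-axis intercept
`f(t) = x(t) + y(t) tan θ(t)` of the normal line satisfies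
`f'(t) = (n-1) F / (y(t)^(n-2) cos²θ(t))`; in particular `f'` has everywhere
the same sign as `F`. -/
theorem normal_intercept_derivative
    (n : ℕ) (hn : 3 ≤ n) (H F : ℝ) (I : Set ℝ) (hI : I.OrdConnected)
    (x y θ : ℝ → ℝ)
    (hypos : ∀ t ∈ I, 0 < y t)
    (hx : ∀ t ∈ I, HasDerivWithinAt x (Real.cos (θ t)) I t)
    (hy : ∀ t ∈ I, HasDerivWithinAt y (Real.sin (θ t)) I t)
    (hθ : ∀ t ∈ I, HasDerivWithinAt θ
      (-((n : ℝ) - 1) * H + ((n : ℝ) - 2) * Real.cos (θ t) / y t) I t)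
    (hF : ∀ t ∈ I, y t ^ (n - 2) * (Real.cos (θ t) - H * y t) = F)
    (hcos : ∀ t ∈ I, Real.cos (θ t) ≠ 0) :
    (∀ t ∈ I, HasDerivWithinAt (fun s => x s + y s * Real.tan (θ s))
      (((n : ℝ) - 1) * F / (y t ^ (n - 2) * Real.cos (θ t) ^ 2)) I t) ∧
    (∀ t ∈ I,
      Real.sign (((n : ℝ) - 1) * F / (y t ^ (n - 2) * Real.cos (θ t) ^ 2))
        = Real.sign F) := by
  constructor
  · intro t ht
    have hy0 : y t ≠ 0 := (hypos t ht).ne'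
    have hc : Real.cos (θ t) ≠ 0 := hcos t ht
    have hyp : (y t) ^ (n - 2) ≠ 0 := pow_ne_zero _ hy0
    have htan : HasDerivWithinAt (fun s => Real.tan (θ s))
        ((1 / Real.cos (θ t) ^ 2) * (-((n : ℝ) - 1) * H + ((n : ℝ) - 2) * Real.cos (θ t) / y t)) I t :=
      (Real.hasDerivAt_tan hc).comp_hasDerivWithinAt t (hθ t ht)
    have h : HasDerivWithinAt (fun s => x s + y s * Real.tan (θ s)) _ I t := (hx t ht).add ((hy t ht).mul htan)
    convert h using 1
    rw [Real.tan_eq_sin_div_cos, ← hF t ht]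
    have hs : Real.sin (θ t) * Real.sin (θ t) = 1 - Real.cos (θ t) ^ 2 := by
      have := Real.sin_sq_add_cos_sq (θ t); nlinarith
    field_simp
    rw [Real.sin_sq]
    ring
  · intro t ht
    have hy0 : (0:ℝ) < y t := hypos t ht
    have hc : Real.cos (θ t) ≠ 0 := hcos t ht
    have hpos : (0:ℝ) < ((n : ℝ) - 1) / (y t ^ (n - 2) * Real.cos (θ t) ^ 2) := by
      apply div_pos
      · have : (3:ℝ) ≤ (n:ℝ) := by exact_mod_cast hn
        linarith
      · exact mul_pos (pow_pos hy0 _) (pow_pos (abs_pos.mpr hc) 2 |>.trans_le (by rw [sq_abs]))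
    have hexp : ((n : ℝ) - 1) * F / (y t ^ (n - 2) * Real.cos (θ t) ^ 2)
        = (((n : ℝ) - 1) / (y t ^ (n - 2) * Real.cos (θ t) ^ 2)) * F := by ring
    rw [hexp]
    rcases lt_trichotomy F 0 with hF' | hF' | hF'
    · rw [Real.sign_of_neg hF', Real.sign_of_neg (mul_neg_of_pos_of_neg hpos hF')]
    · simp [hF']
    · rw [Real.sign_of_pos hF', Real.sign_of_pos (mul_pos hpos hF')]
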